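/- Let K be a field of characteristic zero, R = K[[t]], and G ⊆ R{x_1,...,x_n} a differential ideal. If φ ∈ R^n is a solution of G, then trop(φ) is a solution of trop(G) = {trop(P) : P ∈ G}; i.e., trop(Sol(G)) ⊆ Sol(trop(G)). -/

import Mathlib

/-- Formal derivative of a power series. -/
noncomputable def pd {K : Type*} [Semiring K] (φ : PowerSeries K) : PowerSeries K :=
  PowerSeries.mk fun k => ((k + 1 : ℕ) : K) * PowerSeries.coeff (k + 1) φ

/-- Support of a power series. -/
def suppS {K : Type*} [Semiring K] (φ : PowerSeries K) : Set ℕ :=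
  {k | PowerSeries.coeff k φ ≠ 0}

/-- t-adic valuation of a power series, with value `⊤` at `0`. -/
noncomputable def pval {K : Type*} [Semiring K] (φ : PowerSeries K) : ℕ∞ :=
  sInf ((fun k : ℕ => (k : ℕ∞)) '' suppS φ)

/-- `Val_S(j) = min{s ∈ S : s ≥ j} − j`, or `⊤` if `S ∩ Z_{≥j} = ∅`. -/
noncomputable def ValS (S : Set ℕ) (j : ℕ) : ℕ∞ :=
  sInf ((fun s : ℕ => ((s - j : ℕ) : ℕ∞)) '' {s ∈ S | j ≤ s})

/-- Tropical evaluation of the differential monomial with exponent matrix `m`: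
`ε_m(S) = Σ m_{ij} · Val_{S_i}(j)`. -/
noncomputable def eps {n : ℕ} (m : (Fin n × ℕ) →₀ ℕ) (S : Fin n → Set ℕ) : ℕ∞ :=
  m.sum fun v k => (k : ℕ∞) * ValS (S v.1) v.2

/-- Value at `S` of the tropicalization of a differential polynomial:
`min over monomials m of val(ψ_m) + ε_m(S)`. -/
noncomputable def tropVal {K : Type*} [CommSemiring K] {n : ℕ}
    (P : MvPolynomial (Fin n × ℕ) (PowerSeries K)) (S : Fin n → Set ℕ) : ℕ∞ :=
  sInf ((fun m => pval (MvPolynomial.coeff m P) + eps m S) '' (P.support : Set ((Fin n × ℕ) →₀ ℕ)))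

/-- `S` is a solution of `trop(P)`: the minimum is `⊤` or is attained at two distinct monomials. -/
noncomputable def isTropSol {K : Type*} [CommSemiring K] {n : ℕ}
    (P : MvPolynomial (Fin n × ℕ) (PowerSeries K)) (S : Fin n → Set ℕ) : Prop :=
  tropVal P S = ⊤ ∨
    ∃ m₁ ∈ P.support, ∃ m₂ ∈ P.support, m₁ ≠ m₂ ∧
      pval (MvPolynomial.coeff m₁ P) + eps m₁ S = tropVal P S ∧
      pval (MvPolynomial.coeff m₂ P) + eps m₂ S = tropVal P S

/-- The derivation on the ring of differential polynomials `R{x_1,…,x_n}`,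
extending the derivation `d` on `R`, with `d(x_{ij}) = x_{i(j+1)}`. -/
noncomputable def dPoly {R : Type*} [CommRing R] (d : R → R) {n : ℕ}
    (P : MvPolynomial (Fin n × ℕ) R) : MvPolynomial (Fin n × ℕ) R :=
  ((AddMonoidAlgebra.coeff P).sum fun m c => MvPolynomial.monomial m (d c)) +
    ∑ v ∈ P.vars, MvPolynomial.X (v.1, v.2 + 1) * MvPolynomial.pderiv v P

/-- Evaluation of a differential polynomial at a tuple of power series:
substitute `x_{ij} ↦ d^j φ_i`. -/
noncomputable def evalDP {K : Type*} [CommRing K] {n : ℕ} (φ : Fin n → PowerSeries K)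
    (P : MvPolynomial (Fin n × ℕ) (PowerSeries K)) : PowerSeries K :=
  MvPolynomial.eval (fun v => pd^[v.2] (φ v.1)) P

/-- The bijection `Ψ : K^{Z≥0} → K[[t]]`, `Ψ(a) = Σ a_j t^j / j!`. -/
noncomputable def Psi {K : Type*} [Field K] (a : ℕ → K) : PowerSeries K :=
  PowerSeries.mk fun j => a j / (j.factorial : K)

/-- The Zariski topology on affine `N`-space over `K`. -/
def zariskiT (N : ℕ) (K : Type*) [CommRing K] : TopologicalSpace (Fin N → K) :=
  TopologicalSpace.generateFrom
    {U | ∃ p : MvPolynomial (Fin N) K, U = {x | MvPolynomial.eval x p ≠ 0}}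

/-- A constructible set: a finite union of locally closed sets. -/
def IsConstructibleIn {X : Type*} (τ : TopologicalSpace X) (C : Set X) : Prop :=
  ∃ (r : ℕ) (U Z : Fin r → Set X),
    (∀ i, @IsOpen X τ (U i)) ∧ (∀ i, @IsClosed X τ (Z i)) ∧ C = ⋃ i, U i ∩ Z i

section Aux

lemma pval_eq_order {K : Type*} [Semiring K] (f : PowerSeries K) :
    pval f = f.order := by
  apply le_antisymm
  · rcases lt_or_eq_of_le (le_top : f.order ≤ ⊤) with h | h
    · have hc := PowerSeries.coeff_order (φ := f) (fun h0 => by rw [h0, PowerSeries.order_zero] at h; exact lt_irrefl _ h)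
      refine sInf_le ⟨f.order.toNat, hc, ?_⟩
      exact ENat.coe_toNat h.ne
    · simp [h]
  · apply le_sInf
    rintro x ⟨k, hk, rfl⟩
    exact PowerSeries.order_le k hk

lemma suppS_pd_iter {K : Type*} [Field K] [CharZero K] (f : PowerSeries K) (j : ℕ) :
    suppS (pd^[j] f) = {k | k + j ∈ suppS f} := by
  induction j with
  | zero => simp [suppS]
  | succ j ih =>
    rw [Function.iterate_succ_apply']
    ext k
    have : PowerSeries.coeff k (pd (pd^[j] f)) =
        ((k + 1 : ℕ) : K) * PowerSeries.coeff (k + 1) (pd^[j] f) := by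
      simp [pd]
    simp only [suppS, Set.mem_setOf_eq, this]
    rw [mul_ne_zero_iff]
    have hk : ((k + 1 : ℕ) : K) ≠ 0 := Nat.cast_ne_zero.mpr (Nat.succ_ne_zero k)
    constructor
    · rintro ⟨-, h⟩
      have := (Set.ext_iff.mp ih (k+1)).mp h
      simpa [suppS, add_assoc, add_comm 1 j] using this
    · intro h
      refine ⟨hk, (Set.ext_iff.mp ih (k+1)).mpr ?_⟩
      simpa [suppS, add_assoc, add_comm 1 j] using h

lemma order_pd_iter {K : Type*} [Field K] [CharZero K] (f : PowerSeries K) (j : ℕ) :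
    (pd^[j] f).order = ValS (suppS f) j := by
  rw [← pval_eq_order, pval, suppS_pd_iter, ValS]
  congr 1
  ext x
  constructor
  · rintro ⟨k, hk, rfl⟩
    exact ⟨k + j, ⟨hk, Nat.le_add_left _ _⟩, by simp⟩
  · rintro ⟨s, ⟨hs, hjs⟩, rfl⟩
    exact ⟨s - j, by simpa [Nat.sub_add_cancel hjs], rfl⟩

lemma order_prod {K : Type*} [CommRing K] [IsDomain K] {ι : Type*} (s : Finset ι)
    (f : ι → PowerSeries K) :
    (∏ i ∈ s, f i).order = ∑ i ∈ s, (f i).order := by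
  classical
  induction s using Finset.induction with
  | empty => simp [PowerSeries.order_one]
  | @insert a s h ih => rw [Finset.prod_insert h, Finset.sum_insert h, PowerSeries.order_mul, ih]

lemma order_pow {K : Type*} [CommRing K] [IsDomain K] (f : PowerSeries K) (k : ℕ) :
    (f ^ k).order = (k : ℕ∞) * f.order := by
  induction k with
  | zero => simp [PowerSeries.order_one]
  | succ k ih =>
    rw [pow_succ, PowerSeries.order_mul, ih, Nat.cast_succ, add_mul, one_mul]

lemma order_evalDP_monomial {K : Type*} [Field K] [CharZero K] {n : ℕ}
    (φ : Fin n → PowerSeries K) (m : (Fin n × ℕ) →₀ ℕ) (c : PowerSeries K) :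
    (evalDP φ (MvPolynomial.monomial m c)).order = c.order + eps m (fun i => suppS (φ i)) := by
  rw [evalDP, MvPolynomial.eval_monomial, PowerSeries.order_mul]
  congr 1
  rw [Finsupp.prod, order_prod, eps, Finsupp.sum]
  exact Finset.sum_congr rfl fun v _ => by rw [order_pow, order_pd_iter]

theorem fundamental {K : Type*} [Field K] [CharZero K] {n : ℕ}
    (P : MvPolynomial (Fin n × ℕ) (PowerSeries K)) (φ : Fin n → PowerSeries K)
    (hP : evalDP φ P = 0) : isTropSol P (fun i => suppS (φ i)) := by
  classical
  set S : Fin n → Set ℕ := fun i => suppS (φ i) with hS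
  set f : ((Fin n × ℕ) →₀ ℕ) → ℕ∞ :=
    fun m => pval (MvPolynomial.coeff m P) + eps m S with hf
  set F : ((Fin n × ℕ) →₀ ℕ) → PowerSeries K :=
    fun m => evalDP φ (MvPolynomial.monomial m (MvPolynomial.coeff m P)) with hFdef
  have hsum : ∑ m ∈ P.support, F m = 0 := by
    rw [← hP, evalDP]
    conv_rhs => rw [P.as_sum]
    rw [map_sum]
    rfl
  have hF : ∀ m, (F m).order = f m := fun m => by
    rw [hFdef, order_evalDP_monomial, ← pval_eq_order]
  by_cases htop : tropVal P S = ⊤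
  · left; exact htop
  right
  have htv : tropVal P S = sInf (f '' (P.support : Set ((Fin n × ℕ) →₀ ℕ))) := rfl
  have hne : (f '' (P.support : Set ((Fin n × ℕ) →₀ ℕ))).Nonempty := by
    by_contra h
    rw [Set.not_nonempty_iff_eq_empty] at h
    exact htop (by rw [htv, h, sInf_empty])
  obtain ⟨m₁, hm₁, hm₁v⟩ := hne.csInf_mem ((P.support.finite_toSet).image _)
  rw [← htv] at hm₁v
  refine ⟨m₁, hm₁, ?_⟩
  by_contra hno
  push_neg at hno
  have hgt : ∀ m ∈ P.support, m ≠ m₁ → tropVal P S < f m := by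
    intro m hm hne'
    refine lt_of_le_of_ne ?_ fun h => hno m hm (Ne.symm hne') hm₁v h.symm
    rw [htv]
    exact sInf_le ⟨m, hm, rfl⟩
  lift tropVal P S to ℕ using htop with d hd
  have hc₁ : PowerSeries.coeff d (F m₁) ≠ 0 := by
    have : (F m₁).order = (d : ℕ∞) := by rw [hF, hm₁v]
    exact (PowerSeries.order_eq_nat.mp this).1
  have hc : ∀ m ∈ P.support, m ≠ m₁ → PowerSeries.coeff d (F m) = 0 := by
    intro m hm hne'
    exact PowerSeries.coeff_of_lt_order d (by rw [hF]; exact hgt m hm hne')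
  have := congrArg (PowerSeries.coeff d) hsum
  rw [map_sum, map_zero,
    Finset.sum_eq_single m₁ (fun m hm h => hc m hm h) (fun h => absurd hm₁ h)] at this
  exact hc₁ this

end Aux

/-- `trop(Sol(G)) ⊆ Sol(trop(G))` for a differential ideal `G`. -/
theorem stmt9 {K : Type*} [Field K] [CharZero K] {n : ℕ}
    (G : Ideal (MvPolynomial (Fin n × ℕ) (PowerSeries K)))
    (hdiff : ∀ P ∈ G, dPoly pd P ∈ G)
    (φ : Fin n → PowerSeries K)
    (hφ : ∀ P ∈ G, evalDP φ P = 0) :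
    ∀ P ∈ G, isTropSol P (fun i => suppS (φ i)) := by
  intro P hP
  exact fundamental P φ (hφ P hP)
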